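/- Let F be an invertible real 3×3 matrix whose singular values λ₁ > λ₂ > λ₃ > 0 are pairwise distinct (equivalently, the eigenvalues of FᵀF are λ₁² > λ₂² > λ₃²). Then there exists a two-dimensional linear subspace E of ℝ³ such that ‖F x‖ = ‖x‖ for all x ∈ E (a plane of no distortion) if and only if λ₂ = 1. -/

import Mathlib

open Matrix

private lemma euclid_norm_sq' (x : EuclideanSpace ℝ (Fin 3)) :
    ‖x‖ ^ 2 = (WithLp.equiv 2 (Fin 3 → ℝ) x) ⬝ᵥ (WithLp.equiv 2 (Fin 3 → ℝ) x) := by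
  rw [← real_inner_self_eq_norm_sq]
  simp [PiLp.inner_apply, RCLike.inner_apply, dotProduct]
  rw [EuclideanSpace.real_norm_sq_eq]; simp [sq]

private lemma WithLp_equiv_add' (x y : EuclideanSpace ℝ (Fin 3)) :
    WithLp.equiv 2 (Fin 3 → ℝ) (x + y) = WithLp.equiv 2 _ x + WithLp.equiv 2 _ y := rfl

private lemma WithLp_equiv_smul' (c : ℝ) (x : EuclideanSpace ℝ (Fin 3)) :
    WithLp.equiv 2 (Fin 3 → ℝ) (c • x) = c • WithLp.equiv 2 _ x := rfl

private lemma key_iff' (F Q : Matrix (Fin 3) (Fin 3) ℝ) (d : Fin 3 → ℝ)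
    (hQ : Qᵀ * Q = 1) (hsv : Fᵀ * F = Qᵀ * Matrix.diagonal d * Q)
    (x : EuclideanSpace ℝ (Fin 3)) :
    ‖Matrix.toEuclideanLin F x‖ = ‖x‖ ↔
      ∑ i, (d i - 1) * ((Q *ᵥ (WithLp.equiv 2 (Fin 3 → ℝ) x)) i) ^ 2 = 0 := by
  set x' := WithLp.equiv 2 (Fin 3 → ℝ) x with hx'
  set y := Q *ᵥ x' with hy
  have h0 : WithLp.equiv 2 (Fin 3 → ℝ) (Matrix.toEuclideanLin F x) = F *ᵥ x' :=
    Matrix.ofLp_toEuclideanLin_apply F x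
  have hFx : ‖Matrix.toEuclideanLin F x‖ ^ 2 = ∑ i, d i * y i ^ 2 := by
    rw [euclid_norm_sq', h0]
    calc (F *ᵥ x') ⬝ᵥ (F *ᵥ x')
        = (x' ᵥ* Fᵀ) ⬝ᵥ (F *ᵥ x') := by rw [vecMul_transpose]
      _ = ((x' ᵥ* Fᵀ) ᵥ* F) ⬝ᵥ x' := by rw [dotProduct_mulVec]
      _ = (x' ᵥ* (Fᵀ * F)) ⬝ᵥ x' := by rw [vecMul_vecMul]
      _ = (((x' ᵥ* Qᵀ) ᵥ* Matrix.diagonal d) ᵥ* Q) ⬝ᵥ x' := by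
          rw [hsv, ← vecMul_vecMul, ← vecMul_vecMul]
      _ = ((x' ᵥ* Qᵀ) ᵥ* Matrix.diagonal d) ⬝ᵥ (Q *ᵥ x') := by rw [dotProduct_mulVec]
      _ = (y ᵥ* Matrix.diagonal d) ⬝ᵥ y := by rw [vecMul_transpose]
      _ = ∑ i, d i * y i ^ 2 := by
          simp only [dotProduct, vecMul_diagonal]
          exact Finset.sum_congr rfl fun i _ => by ring
  have hx2 : ‖x‖ ^ 2 = ∑ i, y i ^ 2 := by
    rw [euclid_norm_sq']
    calc x' ⬝ᵥ x' = (x' ᵥ* (Qᵀ * Q)) ⬝ᵥ x' := by rw [hQ, vecMul_one]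
      _ = ((x' ᵥ* Qᵀ) ᵥ* Q) ⬝ᵥ x' := by rw [← vecMul_vecMul]
      _ = (x' ᵥ* Qᵀ) ⬝ᵥ (Q *ᵥ x') := by rw [dotProduct_mulVec]
      _ = y ⬝ᵥ y := by rw [vecMul_transpose]
      _ = ∑ i, y i ^ 2 := by simp [dotProduct, sq]
  have hsum : ∑ i, (d i - 1) * y i ^ 2
      = ‖Matrix.toEuclideanLin F x‖ ^ 2 - ‖x‖ ^ 2 := by
    rw [hFx, hx2, ← Finset.sum_sub_distrib]
    exact Finset.sum_congr rfl fun i _ => by ring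
  constructor
  · intro h; rw [hsum, h]; ring
  · intro h
    rw [h] at hsum
    nlinarith [norm_nonneg (Matrix.toEuclideanLin F x), norm_nonneg x]


private lemma sq_sq_zero {α β a b : ℝ} (hα : 0 < α) (hβ : 0 < β)
    (h : α * a ^ 2 + β * b ^ 2 = 0) : a = 0 ∧ b = 0 := by
  have ha : a ^ 2 = 0 := by nlinarith [sq_nonneg a, sq_nonneg b]
  have hb : b ^ 2 = 0 := by nlinarith [sq_nonneg a, sq_nonneg b]
  exact ⟨pow_eq_zero_iff two_ne_zero |>.mp ha, pow_eq_zero_iff two_ne_zero |>.mp hb⟩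

theorem plane_of_no_distortion_iff_middle_singular_value_one
    (F : Matrix (Fin 3) (Fin 3) ℝ) (hF : IsUnit F)
    (l1 l2 l3 : ℝ) (h12 : l2 < l1) (h23 : l3 < l2) (h3 : 0 < l3)
    (Q : Matrix (Fin 3) (Fin 3) ℝ) (hQ : Q ∈ Matrix.orthogonalGroup (Fin 3) ℝ)
    (hsv : Fᵀ * F = Qᵀ * Matrix.diagonal ![l1 ^ 2, l2 ^ 2, l3 ^ 2] * Q) :
    (∃ E : Submodule ℝ (EuclideanSpace ℝ (Fin 3)),
        Module.finrank ℝ E = 2 ∧ ∀ x ∈ E, ‖Matrix.toEuclideanLin F x‖ = ‖x‖)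
      ↔ l2 = 1 := by
  have hQ1 : Qᵀ * Q = 1 := by
    have := (Matrix.mem_orthogonalGroup_iff' (Fin 3) ℝ).mp hQ
    simpa [Matrix.star_eq_conjTranspose] using this
  have hQ2 : Q * Qᵀ = 1 := by
    have := (Matrix.mem_orthogonalGroup_iff (Fin 3) ℝ).mp hQ
    simpa [Matrix.star_eq_conjTranspose] using this
  have hinj : ∀ w : Fin 3 → ℝ, Q *ᵥ w = 0 → w = 0 := by
    intro w hw
    calc w = (Qᵀ * Q) *ᵥ w := by rw [hQ1, one_mulVec]
      _ = Qᵀ *ᵥ (Q *ᵥ w) := (mulVec_mulVec w Qᵀ Q).symm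
      _ = 0 := by rw [hw, mulVec_zero]
  have key := key_iff' F Q ![l1 ^ 2, l2 ^ 2, l3 ^ 2] hQ1 hsv
  constructor
  · rintro ⟨E, hrank, hE⟩
    let b := Module.finBasisOfFinrankEq ℝ E hrank
    set u : EuclideanSpace ℝ (Fin 3) := ((b 0 : E) : EuclideanSpace ℝ (Fin 3)) with hudef
    set v : EuclideanSpace ℝ (Fin 3) := ((b 1 : E) : EuclideanSpace ℝ (Fin 3)) with hvdef
    have hu : u ∈ E := (b 0).2
    have hv : v ∈ E := (b 1).2
    have li : LinearIndependent ℝ (fun i : Fin 2 => ((b i : E) : EuclideanSpace ℝ (Fin 3))) :=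
      b.linearIndependent.map' E.subtype (Submodule.ker_subtype E)
    have hindep : ∀ s t : ℝ, s • u + t • v = 0 → s = 0 ∧ t = 0 := by
      intro s t hst
      have h := Fintype.linearIndependent_iff.mp li ![s, t] (by
        simpa [Fin.sum_univ_two] using hst)
      exact ⟨h 0, h 1⟩
    set yu := Q *ᵥ (WithLp.equiv 2 (Fin 3 → ℝ) u) with hyu
    set yv := Q *ᵥ (WithLp.equiv 2 (Fin 3 → ℝ) v) with hyv
    have hgen : ∀ p q : ℝ,
        (l1 ^ 2 - 1) * (p * yu 0 + q * yv 0) ^ 2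
          + (l2 ^ 2 - 1) * (p * yu 1 + q * yv 1) ^ 2
          + (l3 ^ 2 - 1) * (p * yu 2 + q * yv 2) ^ 2 = 0 := by
      intro p q
      have hmem : p • u + q • v ∈ E := E.add_mem (E.smul_mem _ hu) (E.smul_mem _ hv)
      have h := (key _).mp (hE _ hmem)
      have hyy : Q *ᵥ (WithLp.equiv 2 (Fin 3 → ℝ) (p • u + q • v)) = p • yu + q • yv := by
        rw [WithLp_equiv_add', WithLp_equiv_smul', WithLp_equiv_smul', mulVec_add,
          mulVec_smul, mulVec_smul]
      rw [hyy] at h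
      simpa [Fin.sum_univ_three, Pi.add_apply, Pi.smul_apply, smul_eq_mul] using h
    have hvec : ∀ s t : ℝ, (∀ i, s * yu i + t * yv i = 0) → s = 0 ∧ t = 0 := by
      intro s t h
      apply hindep s t
      have h0 : Q *ᵥ (WithLp.equiv 2 (Fin 3 → ℝ) (s • u + t • v)) = 0 := by
        rw [WithLp_equiv_add', WithLp_equiv_smul', WithLp_equiv_smul', mulVec_add,
          mulVec_smul, mulVec_smul]
        ext i
        simpa [hyu, hyv] using h i
      have h1 := hinj _ h0
      exact (WithLp.equiv 2 (Fin 3 → ℝ)).injective (by simp [h1])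
    by_contra hne
    rcases lt_or_gt_of_ne hne with hlt | hgt
    · -- l2 < 1 : use first coordinate
      have mu1 : 0 < 1 - l2 ^ 2 := by nlinarith
      have mu2 : 0 < 1 - l3 ^ 2 := by nlinarith
      have hu0 : yu 0 ≠ 0 := by
        intro h
        have e1 := hgen 1 0
        simp only [one_mul, zero_mul, add_zero, h] at e1
        have e1' : (1 - l2 ^ 2) * yu 1 ^ 2 + (1 - l3 ^ 2) * yu 2 ^ 2 = 0 := by
          linear_combination -e1
        obtain ⟨h1, h2⟩ := sq_sq_zero mu1 mu2 e1'
        have := (hvec 1 0 (fun i => by fin_cases i <;> simp [h, h1, h2])).1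
        exact one_ne_zero this
      have e3 := hgen (yv 0) (-(yu 0))
      have e3' : (1 - l2 ^ 2) * (yv 0 * yu 1 - yu 0 * yv 1) ^ 2
          + (1 - l3 ^ 2) * (yv 0 * yu 2 - yu 0 * yv 2) ^ 2 = 0 := by
        linear_combination -e3
      have hC0 : yv 0 * yu 0 - yu 0 * yv 0 = 0 := by ring
      obtain ⟨hA, hB⟩ := sq_sq_zero mu1 mu2 e3'
      have hz := (hvec (yv 0) (-(yu 0)) (fun i => by
        have : yv 0 * yu i + -(yu 0) * yv i = yv 0 * yu i - yu 0 * yv i := by ring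
        rw [this]
        fin_cases i
        · exact hC0
        · exact hA
        · exact hB)).2
      exact hu0 (neg_eq_zero.mp hz)
    · -- l2 > 1 : use last coordinate
      have mu0 : 0 < l1 ^ 2 - 1 := by nlinarith
      have mu1 : 0 < l2 ^ 2 - 1 := by nlinarith
      have hu2 : yu 2 ≠ 0 := by
        intro h
        have e1 := hgen 1 0
        simp only [one_mul, zero_mul, add_zero, h] at e1
        have e1' : (l1 ^ 2 - 1) * yu 0 ^ 2 + (l2 ^ 2 - 1) * yu 1 ^ 2 = 0 := by
          linear_combination e1
        obtain ⟨h1, h2⟩ := sq_sq_zero mu0 mu1 e1'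
        have := (hvec 1 0 (fun i => by fin_cases i <;> simp [h, h1, h2])).1
        exact one_ne_zero this
      have e3 := hgen (yv 2) (-(yu 2))
      have e3' : (l1 ^ 2 - 1) * (yv 2 * yu 0 - yu 2 * yv 0) ^ 2
          + (l2 ^ 2 - 1) * (yv 2 * yu 1 - yu 2 * yv 1) ^ 2 = 0 := by
        linear_combination e3
      have hC2 : yv 2 * yu 2 - yu 2 * yv 2 = 0 := by ring
      obtain ⟨hA, hB⟩ := sq_sq_zero mu0 mu1 e3'
      have hz := (hvec (yv 2) (-(yu 2)) (fun i => by
        have : yv 2 * yu i + -(yu 2) * yv i = yv 2 * yu i - yu 2 * yv i := by ring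
        rw [this]
        fin_cases i
        · exact hA
        · exact hB
        · exact hC2)).2
      exact hu2 (neg_eq_zero.mp hz)
  · intro hl2
    subst hl2
    have hl1 : 1 < l1 := h12
    have hl3 : l3 < 1 := h23
    have hD : 0 < l1 ^ 2 - l3 ^ 2 := by nlinarith
    have hA : 0 < (1 - l3 ^ 2) / (l1 ^ 2 - l3 ^ 2) := div_pos (by nlinarith) hD
    have hC : 0 < (l1 ^ 2 - 1) / (l1 ^ 2 - l3 ^ 2) := div_pos (by nlinarith) hD
    set a := Real.sqrt ((1 - l3 ^ 2) / (l1 ^ 2 - l3 ^ 2)) with hadef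
    set c := Real.sqrt ((l1 ^ 2 - 1) / (l1 ^ 2 - l3 ^ 2)) with hcdef
    have ha : 0 < a := Real.sqrt_pos.mpr hA
    have ha2 : a ^ 2 = (1 - l3 ^ 2) / (l1 ^ 2 - l3 ^ 2) := Real.sq_sqrt hA.le
    have hc2 : c ^ 2 = (l1 ^ 2 - 1) / (l1 ^ 2 - l3 ^ 2) := Real.sq_sqrt hC.le
    have hsum1 : a ^ 2 + c ^ 2 = 1 := by rw [ha2, hc2]; field_simp; try ring
    have hsum2 : l1 ^ 2 * a ^ 2 + l3 ^ 2 * c ^ 2 = 1 := by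
      rw [ha2, hc2]; field_simp; try ring
    set e : EuclideanSpace ℝ (Fin 3) :=
      (WithLp.equiv 2 (Fin 3 → ℝ)).symm (Qᵀ *ᵥ ![a, 0, c]) with hedef
    set f : EuclideanSpace ℝ (Fin 3) :=
      (WithLp.equiv 2 (Fin 3 → ℝ)).symm (Qᵀ *ᵥ ![0, 1, 0]) with hfdef
    have hy : ∀ s t : ℝ,
        Q *ᵥ (WithLp.equiv 2 (Fin 3 → ℝ) (s • e + t • f))
          = s • ![a, 0, c] + t • ![0, 1, 0] := by
      intro s t
      rw [WithLp_equiv_add', WithLp_equiv_smul', WithLp_equiv_smul', hedef, hfdef,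
        Equiv.apply_symm_apply, Equiv.apply_symm_apply, mulVec_add, mulVec_smul,
        mulVec_smul]
      simp [mulVec_mulVec, hQ2]
    have hli : LinearIndependent ℝ ![e, f] := by
      rw [LinearIndependent.pair_iff]
      intro s t hst
      have h0 : Q *ᵥ (WithLp.equiv 2 (Fin 3 → ℝ) (s • e + t • f)) = 0 := by
        rw [hst]; simp
      rw [hy s t] at h0
      have h1 := congrFun h0 0
      have h2 := congrFun h0 1
      simp [Pi.add_apply, Pi.smul_apply, smul_eq_mul] at h1 h2
      exact ⟨h1.resolve_right ha.ne', h2⟩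
    refine ⟨Submodule.span ℝ {e, f}, ?_, ?_⟩
    · have hres : ({e, f} : Set (EuclideanSpace ℝ (Fin 3))) = Set.range ![e, f] := by
        ext z
        simp [Fin.exists_fin_two, or_comm, eq_comm]
      rw [hres]
      simpa using finrank_span_eq_card hli
    · intro x hx
      rcases Submodule.mem_span_pair.mp hx with ⟨s, t, rfl⟩
      rw [key, hy s t]
      simp only [Fin.sum_univ_three, Pi.add_apply, Pi.smul_apply, smul_eq_mul,
        Matrix.cons_val_zero, Matrix.cons_val_one, Matrix.head_cons,
        Matrix.cons_val_two, Matrix.tail_cons]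
      linear_combination s ^ 2 * hsum2 - s ^ 2 * hsum1
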